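/- arXiv:0704.2813 — 4 statements merged into one kernel-verified Lean document; each statement's English description precedes it below -/
import Mathlib

section
/- For rank r = 2 with all weights equal to 1, the generating function M(x) ∈ ℚ⟦x⟧ of the non-colored Motzkin numbers of rank 2 satisfies 0 = 1 − (x+1)M + x(x+2)M² − x²(x+1)M³ + x⁴M⁴. -/
open PowerSeries Finset

/-- The weight (number of color choices) of a single step of vertical displacement `z`:
up-steps `(1,j)` have weight `u j`, the level-step `(1,0)` has weight `l`, and
down-steps `(1,-j)` have weight `d j`. -/
def stepWeight (u : ℕ → ℕ) (l : ℕ) (d : ℕ → ℕ) (z : ℤ) : ℕ :=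
  if 0 < z then u z.toNat else if z < 0 then d (-z).toNat else l

/-- `motzkinCount r u l d s t n` is the weighted number `|𝒜_{s,t}(n)|` of lattice paths of
length `n` using admissible steps `(1,z)` with `z ∈ {-r, …, r}` (step `i` is encoded by
`f i : Fin (2*r+1)` via `z = (f i : ℤ) - r`), starting at height `s`, ending at height `t`,
and never going below the x-axis; each path is counted with weight the product of the
weights of its steps (i.e. the number of its colorings). -/
def motzkinCount (r : ℕ) (u : ℕ → ℕ) (l : ℕ) (d : ℕ → ℕ) (s t : ℕ) (n : ℕ) : ℕ :=
  ∑ f : Fin n → Fin (2 * r + 1),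
    if (∀ k : Fin (n + 1),
          0 ≤ (s : ℤ) + ∑ i : Fin n, if (i : ℕ) < (k : ℕ) then ((f i : ℤ) - r) else 0) ∧
        (s : ℤ) + (∑ i : Fin n, ((f i : ℤ) - r)) = t
    then ∏ i : Fin n, stepWeight u l d ((f i : ℤ) - r)
    else 0

/-- The generating function `A_{s,t}(x) = Σ_{n≥0} |𝒜_{s,t}(n)| xⁿ ∈ ℚ⟦x⟧`. -/
noncomputable def motzkinGF (r : ℕ) (u : ℕ → ℕ) (l : ℕ) (d : ℕ → ℕ) (s t : ℕ) :
    PowerSeries ℚ :=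
  PowerSeries.mk fun n => (motzkinCount r u l d s t n : ℚ)

namespace Motzkin2Aux

def mc (s t n : ℕ) : ℕ := motzkinCount 2 (fun _ => 1) 1 (fun _ => 1) s t n

lemma mc_eq (s t n : ℕ) : mc s t n = ∑ f : Fin n → Fin 5,
    if (∀ k : Fin (n + 1),
          0 ≤ (s : ℤ) + ∑ i : Fin n, if (i : ℕ) < (k : ℕ) then ((f i : ℤ) - 2) else 0) ∧
        (s : ℤ) + (∑ i : Fin n, ((f i : ℤ) - 2)) = t
    then 1 else 0 := by
  unfold mc motzkinCount
  norm_num [stepWeight]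

lemma mc_zero (s t : ℕ) : mc s t 0 = if s = t then 1 else 0 := by
  rw [mc_eq]
  simp [Nat.cast_inj]

def Cond (s t n : ℕ) (f : Fin n → Fin 5) : Prop :=
  (∀ k : Fin (n + 1),
      0 ≤ (s : ℤ) + ∑ i : Fin n, if (i : ℕ) < (k : ℕ) then ((f i : ℤ) - 2) else 0) ∧
    (s : ℤ) + (∑ i : Fin n, ((f i : ℤ) - 2)) = t

instance (s t n : ℕ) (f : Fin n → Fin 5) : Decidable (Cond s t n f) := by
  unfold Cond; infer_instance

lemma mc_eq' (s t n : ℕ) : mc s t n = ∑ f : Fin n → Fin 5, if Cond s t n f then 1 else 0 := by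
  rw [mc_eq]; rfl

lemma cond_cons_iff (n : ℕ) (s t : ℕ) (j : Fin 5) (f' : Fin n → Fin 5) :
    Cond s t (n+1) (Fin.cons j f') ↔
      ((0 ≤ (s:ℤ) + ((j:ℤ) - 2)) ∧
       ((∀ k : Fin (n + 1),
          0 ≤ ((s:ℤ) + ((j:ℤ)-2)) + ∑ i : Fin n, if (i : ℕ) < (k : ℕ) then ((f' i : ℤ) - 2) else 0) ∧
        ((s:ℤ) + ((j:ℤ)-2)) + (∑ i : Fin n, ((f' i : ℤ) - 2)) = t)) := by
  have hsum : ∀ k : Fin (n+1), ∑ i : Fin (n+1), (if (i : ℕ) < (k.succ : ℕ) then (((Fin.cons j f' : Fin (n+1) → Fin 5) i : ℤ) - 2) else 0)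
      = ((j:ℤ) - 2) + ∑ i : Fin n, if (i : ℕ) < (k : ℕ) then ((f' i : ℤ) - 2) else 0 := by
    intro k
    rw [Fin.sum_univ_succ]
    simp [Fin.succ_lt_succ_iff]
  unfold Cond
  constructor
  · rintro ⟨h1, h2⟩
    have h1' : ∀ k : Fin (n+1), 0 ≤ ((s:ℤ) + ((j:ℤ)-2)) + ∑ i : Fin n, if (i : ℕ) < (k : ℕ) then ((f' i : ℤ) - 2) else 0 := by
      intro k
      have := h1 k.succ
      rw [hsum k] at this
      linarith
    refine ⟨?_, h1', ?_⟩
    · have := h1' 0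
      simpa using this
    · rw [Fin.sum_univ_succ] at h2
      simp only [Fin.cons_zero, Fin.cons_succ] at h2
      linarith
  · rintro ⟨h0, h1, h2⟩
    constructor
    · intro k
      induction k using Fin.cases with
      | zero => simp
      | succ k => rw [hsum k]; have := h1 k; linarith
    · rw [Fin.sum_univ_succ]
      simp only [Fin.cons_zero, Fin.cons_succ]
      linarith

lemma sumCons (n : ℕ) (s t : ℕ) (j : Fin 5) :
    (∑ f' : Fin n → Fin 5, if Cond s t (n+1) (Fin.cons j f') then 1 else 0)
      = if 0 ≤ (s:ℤ) + ((j:ℤ) - 2) then mc ((s:ℤ) + ((j:ℤ) - 2)).toNat t n else 0 := by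
  by_cases h : 0 ≤ (s:ℤ) + ((j:ℤ) - 2)
  · rw [if_pos h, mc_eq']
    have hcast : ((((s:ℤ) + ((j:ℤ) - 2)).toNat : ℕ) : ℤ) = (s:ℤ) + ((j:ℤ) - 2) :=
      Int.toNat_of_nonneg h
    apply Finset.sum_congr rfl
    intro f' _
    congr 1
    rw [cond_cons_iff]
    unfold Cond
    rw [hcast]
    simp [h]
  · rw [if_neg h]
    apply Finset.sum_eq_zero
    intro f' _
    rw [if_neg]
    rw [cond_cons_iff]
    tauto

lemma mc_succ (s t n : ℕ) :
    mc s t (n+1) = (if 2 ≤ s then mc (s-2) t n else 0) + (if 1 ≤ s then mc (s-1) t n else 0)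
      + mc s t n + mc (s+1) t n + mc (s+2) t n := by
  rw [mc_eq']
  rw [← Equiv.sum_comp (Fin.consEquiv (fun _ : Fin (n+1) => Fin 5))
      (fun f => if Cond s t (n+1) f then 1 else 0)]
  rw [Fintype.sum_prod_type]
  have key : ∀ j : Fin 5, (∑ f' : Fin n → Fin 5,
      if Cond s t (n+1) ((Fin.consEquiv (fun _ : Fin (n+1) => Fin 5)) (j, f')) then 1 else 0)
      = if 0 ≤ (s:ℤ) + ((j:ℤ) - 2) then mc ((s:ℤ) + ((j:ℤ) - 2)).toNat t n else 0 :=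
    fun j => sumCons n s t j
  rw [Fin.sum_univ_five]
  rw [key 0, key 1, key 2, key 3, key 4]
  have c0 : ((0 : Fin 5) : ℤ) = 0 := rfl
  have c1 : ((1 : Fin 5) : ℤ) = 1 := rfl
  have c2 : ((2 : Fin 5) : ℤ) = 2 := rfl
  have c3 : ((3 : Fin 5) : ℤ) = 3 := rfl
  have c4 : ((4 : Fin 5) : ℤ) = 4 := rfl
  rw [c0, c1, c2, c3, c4]
  have e2 : ((s:ℤ) + (2 - 2)).toNat = s := by omega
  have e3 : ((s:ℤ) + (3 - 2)).toNat = s + 1 := by omega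
  have e4 : ((s:ℤ) + (4 - 2)).toNat = s + 2 := by omega
  rw [e2, e3, e4]
  rw [if_pos (by omega : (0:ℤ) ≤ (s:ℤ) + (2 - 2)),
      if_pos (by omega : (0:ℤ) ≤ (s:ℤ) + (3 - 2)),
      if_pos (by omega : (0:ℤ) ≤ (s:ℤ) + (4 - 2))]
  by_cases h2 : 2 ≤ s
  · have h1 : 1 ≤ s := by omega
    rw [if_pos h2, if_pos h1,
        if_pos (by omega : (0:ℤ) ≤ (s:ℤ) + (0 - 2)),
        if_pos (by omega : (0:ℤ) ≤ (s:ℤ) + (1 - 2))]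
    have : ((s:ℤ) + (0 - 2)).toNat = s - 2 := by omega
    rw [this]
    have : ((s:ℤ) + (1 - 2)).toNat = s - 1 := by omega
    rw [this]
  · by_cases h1 : 1 ≤ s
    · rw [if_neg h2, if_pos h1,
          if_neg (by omega : ¬ (0:ℤ) ≤ (s:ℤ) + (0 - 2)),
          if_pos (by omega : (0:ℤ) ≤ (s:ℤ) + (1 - 2))]
      have : ((s:ℤ) + (1 - 2)).toNat = s - 1 := by omega
      rw [this]
    · rw [if_neg h2, if_neg h1,
          if_neg (by omega : ¬ (0:ℤ) ≤ (s:ℤ) + (0 - 2)),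
          if_neg (by omega : ¬ (0:ℤ) ≤ (s:ℤ) + (1 - 2))]

noncomputable def A (s : ℕ) : PowerSeries ℚ := PowerSeries.mk fun n => (mc s 0 n : ℚ)

lemma FE (s : ℕ) : A s = (if s = 0 then (1 : PowerSeries ℚ) else 0)
    + X * ((if 2 ≤ s then A (s-2) else 0) + (if 1 ≤ s then A (s-1) else 0)
        + A s + A (s+1) + A (s+2)) := by
  ext n
  cases n with
  | zero =>
    simp [A, mc_zero, apply_ite (PowerSeries.coeff (R := ℚ) 0)]
  | succ n =>
    rw [map_add, coeff_succ_X_mul]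
    simp only [A, coeff_mk, mc_succ s 0 n, map_add,
      apply_ite (PowerSeries.coeff (R := ℚ) (n+1)), apply_ite (PowerSeries.coeff (R := ℚ) n),
      map_zero, map_one, coeff_mk]
    have h1 : PowerSeries.coeff (R := ℚ) (n+1) (1 : PowerSeries ℚ) = 0 := by
      simp [PowerSeries.coeff_one]
    rw [h1]
    push_cast
    split_ifs <;> simp <;> ring

noncomputable def F : PowerSeries (PowerSeries ℚ) := PowerSeries.mk A

noncomputable abbrev Cq : PowerSeries ℚ →+* PowerSeries (PowerSeries ℚ) := PowerSeries.C (R := PowerSeries ℚ)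

noncomputable def e : PowerSeries ℚ := -(X : PowerSeries ℚ) * A 0
noncomputable def aa : PowerSeries ℚ := -(X : PowerSeries ℚ) * (A 0 + A 1)

lemma kernel :
    (X^2 - Cq X * (1 + X + X^2 + X^3 + X^4)) * F = Cq e + Cq aa * X + X^2 := by
  have expand : (X^2 - Cq X * (1 + X + X^2 + X^3 + X^4)) * F
      = X^2 * F - Cq X * (X^0 * F) - Cq X * (X^1 * F) - Cq X * (X^2 * F)
        - Cq X * (X^3 * F) - Cq X * (X^4 * F) := by ring
  rw [expand]
  ext s : 1
  have cF : ∀ (k s : ℕ), (PowerSeries.coeff (R := PowerSeries ℚ) s) ((X:PowerSeries (PowerSeries ℚ))^k * F)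
      = if k ≤ s then A (s - k) else 0 := by
    intro k s
    rw [PowerSeries.coeff_X_pow_mul']
    simp [F]
  simp only [map_sub, map_add, PowerSeries.coeff_C_mul, cF, PowerSeries.coeff_C,
    PowerSeries.coeff_X, PowerSeries.coeff_X_pow]
  rcases s with _ | _ | m
  · norm_num [e]
  · norm_num [aa]
    ring
  · simp only [Nat.succ_sub_succ]
    norm_num
    simp only [show (3 ≤ m + 1 + 1) ↔ (1 ≤ m) by omega,
        show (4 ≤ m + 1 + 1) ↔ (2 ≤ m) by omega,
        show (m + 1 + 1 = 2) ↔ (m = 0) by omega]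
    have hite : ∀ (c : Prop) [Decidable c] (y : PowerSeries ℚ),
        (if c then (X : PowerSeries ℚ) * y else 0) = X * (if c then y else 0) := by
      intros c _ y; split <;> simp
    rw [hite, hite]
    have key := FE m
    rw [show m + 1 + 1 = m + 2 by omega]
    linear_combination key

noncomputable def K : PowerSeries (PowerSeries ℚ) := X^2 - Cq X * (1 + X + X^2 + X^3 + X^4)

lemma constF : constantCoeff (R := PowerSeries ℚ) F = A 0 := by
  simp [F, PowerSeries.coeff_zero_eq_constantCoeff.symm]

lemma unitF : IsUnit F := by
  rw [PowerSeries.isUnit_iff_constantCoeff, constF, PowerSeries.isUnit_iff_constantCoeff]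
  have : PowerSeries.constantCoeff (R := ℚ) (A 0) = 1 := by
    simp [A, PowerSeries.coeff_zero_eq_constantCoeff.symm, mc_zero]
  rw [this]
  exact isUnit_one

lemma X_ne : (X : PowerSeries ℚ) ≠ 0 := PowerSeries.X_ne_zero

theorem final (M : PowerSeries ℚ) (hM : M = A 0) :
    (0 : PowerSeries ℚ) =
      1 - (X + 1) * M + X * (X + 2) * M ^ 2 - X ^ 2 * (X + 1) * M ^ 3 + X ^ 4 * M ^ 4 := by
  obtain ⟨u, hu⟩ := unitF
  set p : PowerSeries (PowerSeries ℚ) := ((u⁻¹ : _) : PowerSeries (PowerSeries ℚ)) with hp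
  have hNp : (Cq e + Cq aa * X + X^2) * p = K := by
    calc (Cq e + Cq aa * X + X^2) * p = ((X^2 - Cq X * (1 + X + X^2 + X^3 + X^4)) * F) * p := by
          rw [kernel]
    _ = K * (↑u * ↑u⁻¹) := by rw [hu]; unfold K; ring
    _ = K := by rw [Units.mul_inv, mul_one]
  set pj : ℕ → PowerSeries ℚ := fun j => PowerSeries.coeff j p with hpj
  have cNp : ∀ j, PowerSeries.coeff j ((Cq e + Cq aa * X + X^2) * p)
      = e * pj j + aa * (if 1 ≤ j then pj (j-1) else 0) + (if 2 ≤ j then pj (j-2) else 0) := by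
    intro j
    rw [show (Cq e + Cq aa * X + X^2) * p = Cq e * p + Cq aa * (X^1 * p) + X^2 * p by ring]
    rw [map_add, map_add, PowerSeries.coeff_C_mul, PowerSeries.coeff_C_mul,
      PowerSeries.coeff_X_pow_mul', PowerSeries.coeff_X_pow_mul']
    try simp [hpj, mul_ite]
  have hEq : ∀ j, e * pj j + aa * (if 1 ≤ j then pj (j-1) else 0) + (if 2 ≤ j then pj (j-2) else 0)
      = PowerSeries.coeff j K := fun j => by rw [← cNp, hNp]
  have cK : ∀ j, PowerSeries.coeff j K = (if j = 2 then (1:PowerSeries ℚ) else 0)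
      - X * ((if j = 0 then 1 else 0) + (if j = 1 then 1 else 0) + (if j = 2 then 1 else 0)
          + (if j = 3 then 1 else 0) + (if j = 4 then (1:PowerSeries ℚ) else 0)) := by
    intro j
    rw [show K = X^2 - (Cq X * X^0 + Cq X * X^1 + Cq X * X^2 + Cq X * X^3 + Cq X * X^4) by
      unfold K; ring]
    simp only [map_sub, map_add, PowerSeries.coeff_C_mul, PowerSeries.coeff_X_pow]
    ring
  have hrec : ∀ j, pj (j+3) = X * (A 0) * pj (j+5) + X * (A 0 + A 1) * pj (j+4) := by
    intro j
    have h := hEq (j+5)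
    rw [cK (j+5)] at h
    rw [if_pos (by omega : 1 ≤ j+5), if_pos (by omega : 2 ≤ j+5)] at h
    simp only [if_neg (by omega : ¬(j+5 = 2)), if_neg (by omega : ¬(j+5 = 0)),
        if_neg (by omega : ¬(j+5 = 1)),
        if_neg (by omega : ¬(j+5 = 3)), if_neg (by omega : ¬(j+5 = 4))] at h
    have h4 : j + 5 - 1 = j + 4 := by omega
    have h3 : j + 5 - 2 = j + 3 := by omega
    rw [h4, h3] at h
    unfold e aa at h
    linear_combination h
  have hdvd : ∀ m j, (X : PowerSeries ℚ)^m ∣ pj (j+3) := by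
    intro m
    induction m with
    | zero => intro j; simpa using dvd_refl (1 : PowerSeries ℚ)
    | succ m ih =>
      intro j
      obtain ⟨c1, hc1⟩ := ih (j+2)
      obtain ⟨c2, hc2⟩ := ih (j+1)
      rw [show j+2+3 = j+5 by omega] at hc1
      rw [show j+1+3 = j+4 by omega] at hc2
      exact ⟨A 0 * c1 + (A 0 + A 1) * c2, by rw [hrec j, hc1, hc2, pow_succ]; ring⟩
  have hzero : ∀ j, pj (j+3) = 0 := by
    intro j
    ext n
    have h := hdvd (n+1) j
    rw [PowerSeries.X_pow_dvd_iff] at h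
    simpa using h n (Nat.lt_succ_self n)
  -- the five coefficient equations
  have hE0 : e * pj 0 = -X := by
    have h := hEq 0; rw [cK 0] at h; norm_num at h; linear_combination h
  have hE1 : e * pj 1 + aa * pj 0 = -X := by
    have h := hEq 1; rw [cK 1] at h; norm_num at h; linear_combination h
  have hE2 : e * pj 2 + aa * pj 1 + pj 0 = 1 - X := by
    have h := hEq 2; rw [cK 2] at h; norm_num at h; linear_combination h
  have hz3 : pj 3 = 0 := by have h := hzero 0; norm_num at h; exact h
  have hz4 : pj 4 = 0 := by have h := hzero 1; norm_num at h; exact h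
  have hE3 : aa * pj 2 + pj 1 = -X := by
    have h := hEq 3; rw [cK 3] at h; norm_num at h
    rw [hz3] at h
    linear_combination h
  have hE4 : pj 2 = -X := by
    have h := hEq 4; rw [cK 4] at h; norm_num at h
    rw [hz3, hz4] at h
    linear_combination h
  -- elimination
  have hp1 : pj 1 = -X + aa * X := by rw [hE4] at hE3; linear_combination hE3
  have hp0 : pj 0 = 1 - X + aa*X - aa^2*X + e*X := by
    rw [hE4, hp1] at hE2; linear_combination hE2
  rw [hp1, hp0] at hE1
  rw [hp0] at hE0
  have hXG : X * ((e^2 - 1) * aa + e - e^2) = 0 := by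
    linear_combination e * hE1 - aa * hE0
  have hG : (e^2 - 1) * aa + e - e^2 = 0 :=
    mul_left_cancel₀ X_ne (by rw [hXG, mul_zero])
  have hT : (e - 1)^2 * (X*(e^4+e^3+e^2+e+1) + e^3 + 2*e^2 + e) = 0 := by
    linear_combination (e^2-1)^2 * hE0 - (e*X*(e - 1 - (e^2-1)*aa)) * hG
  have he1 : (e - 1) ≠ 0 := by
    intro hcon
    have hc := congrArg (PowerSeries.constantCoeff (R := ℚ)) hcon
    unfold e at hc
    simp [PowerSeries.constantCoeff_X] at hc
  have hQ : X*(e^4+e^3+e^2+e+1) + e^3 + 2*e^2 + e = 0 :=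
    mul_left_cancel₀ (pow_ne_zero 2 he1) (by rw [hT, mul_zero])
  have heM : e = -X * M := by rw [hM]; rfl
  rw [heM] at hQ
  have hXQ : X * (1 - (X + 1) * M + X * (X + 2) * M ^ 2 - X ^ 2 * (X + 1) * M ^ 3 + X ^ 4 * M ^ 4) = X * 0 := by
    rw [mul_zero]
    linear_combination hQ
  exact (mul_left_cancel₀ X_ne hXQ).symm

end Motzkin2Aux

/-- the generating function `M` of the non-colored Motzkin numbers of rank 2
satisfies `0 = 1 − (x+1)M + x(x+2)M² − x²(x+1)M³ + x⁴M⁴`. -/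
theorem motzkin_rank_two_uncolored_gf (M : PowerSeries ℚ)
    (hM : M = motzkinGF 2 (fun _ => 1) 1 (fun _ => 1) 0 0) :
    (0 : PowerSeries ℚ) =
      1 - (X + 1) * M + X * (X + 2) * M ^ 2 - X ^ 2 * (X + 1) * M ^ 3 + X ^ 4 * M ^ 4 := by
  have hM' : M = Motzkin2Aux.A 0 := by rw [hM]; rfl
  exact Motzkin2Aux.final M hM'
end

section
/- For rank r = 3 with all weights equal to 1, the generating function M(x) ∈ ℚ⟦x⟧ of the non-colored Motzkin numbers of rank 3 satisfies 0 = 1 − (1+x)M + 2xM² + x²(1−2x)M⁴ + 2x⁵M⁶ − x⁶(1+x)M⁷ + x⁸M⁸. -/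
open PowerSeries Finset

/-- Clean recursive count of rank-3 Motzkin-type paths from height `s` to height `t`
of length `n`, staying nonnegative. -/
def c3 : ℕ → ℕ → ℕ → ℕ
  | 0, s, t => if s = t then 1 else 0
  | n+1, s, t => ∑ z ∈ Finset.range 7, if 3 ≤ s + z then c3 n (s + z - 3) t else 0

lemma c3_zero (s t : ℕ) : c3 0 s t = if s = t then 1 else 0 := rfl

lemma c3_succ (n s t : ℕ) :
    c3 (n+1) s t = ∑ z ∈ Finset.range 7, if 3 ≤ s + z then c3 n (s + z - 3) t else 0 := rfl

/-- last-step recurrence -/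
lemma c3_succ' (n s t : ℕ) :
    c3 (n+1) s t = ∑ z ∈ Finset.range 7, if 3 ≤ t + z then c3 n s (t + z - 3) else 0 := by
  induction n generalizing s t with
  | zero =>
    rw [c3_succ]
    have h1 : ∀ z ∈ Finset.range 7,
        (if 3 ≤ s + z then c3 0 (s + z - 3) t else 0) = if s + z = t + 3 then 1 else 0 := by
      intro z hz
      simp only [c3_zero]
      split_ifs <;> omega
    have h2 : ∀ z ∈ Finset.range 7,
        (if 3 ≤ t + z then c3 0 s (t + z - 3) else 0) = if t + z = s + 3 then 1 else 0 := by
      intro z hz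
      simp only [c3_zero]
      split_ifs <;> omega
    rw [Finset.sum_congr rfl h1, Finset.sum_congr rfl h2]
    rw [← Finset.sum_range_reflect]
    refine Finset.sum_congr rfl fun z hz => ?_
    simp only [Finset.mem_range] at hz
    split_ifs <;> omega
  | succ n ih =>
    rw [c3_succ]
    have step : ∀ z ∈ Finset.range 7, (if 3 ≤ s + z then c3 (n+1) (s + z - 3) t else 0) =
        ∑ w ∈ Finset.range 7, (if 3 ≤ s + z then (if 3 ≤ t + w then c3 n (s + z - 3) (t + w - 3) else 0) else 0) := by
      intro z hz
      rw [ih]; split_ifs with h; · rfl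
      · simp
    rw [Finset.sum_congr rfl step]
    rw [Finset.sum_comm]
    refine Finset.sum_congr rfl fun w hw => ?_
    split_ifs with h
    · rw [c3_succ]
    · exact Finset.sum_eq_zero fun z hz => by simp [h]

lemma c3_rev (n s t : ℕ) : c3 n s t = c3 n t s := by
  induction n generalizing s t with
  | zero => simp only [c3_zero]; split_ifs <;> omega
  | succ n ih =>
    rw [c3_succ, c3_succ' n t s]
    refine Finset.sum_congr rfl fun z hz => ?_
    split_ifs with h
    · exact ih _ _
    · rfl

lemma ite_sum_zero {α : Type*} {P : Prop} [Decidable P] (s : Finset α) (f : α → ℕ) :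
    (if P then ∑ x ∈ s, f x else 0) = ∑ x ∈ s, if P then f x else 0 := by
  split_ifs <;> simp

lemma sum_c3_zero (b m : ℕ) : (∑ h' ∈ Finset.range m, c3 0 b h') = if b < m then 1 else 0 := by
  induction m with
  | zero => simp
  | succ m ihm =>
    rw [Finset.sum_range_succ, ihm, c3_zero]
    split_ifs <;> omega

lemma sum_reindex (F : ℕ → ℕ) (a h : ℕ) (h1 : 1 ≤ h) (ha : h ≤ a) :
    (∑ z ∈ Finset.range 7, if 3 ≤ a + z ∧ a + z - 3 < h then F (a + z - 3) else 0)
      = ∑ j ∈ Finset.range h, if a ≤ j + 3 then F j else 0 := by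
  rw [← Finset.sum_filter, ← Finset.sum_filter]
  refine Finset.sum_nbij' (fun z => a + z - 3) (fun j => j + 3 - a) ?_ ?_ ?_ ?_ ?_ <;>
    simp only [Finset.mem_filter, Finset.mem_range, and_imp] <;> intros
  · omega
  · omega
  · omega
  · omega
  · trivial

lemma c3_fp (h : ℕ) (h1 : 1 ≤ h) :
    ∀ n a, h ≤ a →
    c3 n a 0 = ∑ k ∈ Finset.range n, ∑ j ∈ Finset.range h,
      (if h ≤ j + 3 then ∑ h' ∈ Finset.range (j + 4 - h), c3 k (a - h) h' else 0)
        * c3 (n - 1 - k) j 0 := by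
  intro n
  induction n with
  | zero =>
    intro a ha
    rw [c3_zero, Finset.sum_range_zero, if_neg (by omega)]
  | succ n ih =>
    intro a ha
    rw [Finset.sum_range_succ']
    have e1 : ∀ k : ℕ, n + 1 - 1 - (k + 1) = n - 1 - k := fun k => by omega
    have e2 : n + 1 - 1 - 0 = n := by omega
    simp only [e1, e2]
    have key0 : ∀ j : ℕ, j < h →
        (if h ≤ j + 3 then ∑ h' ∈ Finset.range (j + 4 - h), c3 0 (a - h) h' else 0)
          = if a ≤ j + 3 then 1 else 0 := by
      intro j hj
      rw [sum_c3_zero]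
      split_ifs <;> omega
    have part0 : (∑ j ∈ Finset.range h,
        (if h ≤ j + 3 then ∑ h' ∈ Finset.range (j + 4 - h), c3 0 (a - h) h' else 0) * c3 n j 0)
        = ∑ j ∈ Finset.range h, if a ≤ j + 3 then c3 n j 0 else 0 := by
      refine Finset.sum_congr rfl fun j hj => ?_
      rw [key0 j (Finset.mem_range.mp hj)]
      split_ifs <;> simp
    rw [part0]
    have hrr := sum_reindex (fun b => c3 n b 0) a h h1 ha
    rw [← hrr, c3_succ]
    have split : ∀ z ∈ Finset.range 7, (if 3 ≤ a + z then c3 n (a + z - 3) 0 else 0)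
        = (if 3 ≤ a + z ∧ h ≤ a + z - 3 then c3 n (a + z - 3) 0 else 0)
          + (if 3 ≤ a + z ∧ a + z - 3 < h then c3 n (a + z - 3) 0 else 0) := by
      intro z hz; split_ifs <;> omega
    rw [Finset.sum_congr rfl split, Finset.sum_add_distrib]
    congr 1
    have expand : ∀ z ∈ Finset.range 7,
        (if 3 ≤ a + z ∧ h ≤ a + z - 3 then c3 n (a + z - 3) 0 else 0)
        = ∑ k ∈ Finset.range n, ∑ j ∈ Finset.range h,
            (if 3 ≤ a + z ∧ h ≤ a + z - 3 then
              (if h ≤ j + 3 then ∑ h' ∈ Finset.range (j + 4 - h), c3 k (a + z - 3 - h) h' else 0)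
              else 0) * c3 (n - 1 - k) j 0 := by
      intro z hz
      split_ifs with hc
      · rw [ih (a + z - 3) hc.2]
      · simp
    rw [Finset.sum_congr rfl expand, Finset.sum_comm]
    refine Finset.sum_congr rfl fun k hk => ?_
    rw [Finset.sum_comm]
    refine Finset.sum_congr rfl fun j hj => ?_
    rw [← Finset.sum_mul]
    congr 1
    by_cases hj3 : h ≤ j + 3
    · simp only [if_pos hj3]
      have exp2 : ∀ h' ∈ Finset.range (j + 4 - h), c3 (k + 1) (a - h) h'
          = ∑ z ∈ Finset.range 7, if 3 ≤ (a - h) + z then c3 k ((a - h) + z - 3) h' else 0 :=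
        fun h' _ => c3_succ k (a - h) h'
      rw [Finset.sum_congr rfl exp2, Finset.sum_comm]
      refine Finset.sum_congr rfl fun z hz => ?_
      by_cases hcz : 3 ≤ a + z ∧ h ≤ a + z - 3
      · rw [if_pos hcz, show a + z - 3 - h = a - h + z - 3 by omega]
        exact Finset.sum_congr rfl fun h' _ => (if_pos (by omega)).symm
      · rw [if_neg hcz]
        symm
        exact Finset.sum_eq_zero fun h' _ => if_neg (by omega)
    · simp only [if_neg hj3]
      exact Finset.sum_eq_zero fun z _ => by split_ifs <;> rfl

lemma fp1 (n : ℕ) : c3 n 1 0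
    = ∑ k ∈ Finset.range n, (c3 k 0 0 + c3 k 0 1 + c3 k 0 2) * c3 (n-1-k) 0 0 := by
  simpa [Finset.sum_range_succ] using c3_fp 1 le_rfl n 1 le_rfl

lemma fp2 (n : ℕ) : c3 n 2 0
    = ∑ k ∈ Finset.range n, ((c3 k 0 0 + c3 k 0 1) * c3 (n-1-k) 0 0
        + (c3 k 0 0 + c3 k 0 1 + c3 k 0 2) * c3 (n-1-k) 1 0) := by
  simpa [Finset.sum_range_succ] using c3_fp 2 one_le_two n 2 le_rfl

lemma fp3 (n : ℕ) : c3 n 3 0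
    = ∑ k ∈ Finset.range n, (c3 k 0 0 * c3 (n-1-k) 0 0
        + (c3 k 0 0 + c3 k 0 1) * c3 (n-1-k) 1 0
        + (c3 k 0 0 + c3 k 0 1 + c3 k 0 2) * c3 (n-1-k) 2 0) := by
  simpa [Finset.sum_range_succ] using c3_fp 3 (by norm_num) n 3 le_rfl

lemma c3_e0 (n : ℕ) : c3 (n+1) 0 0 = c3 n 0 0 + c3 n 1 0 + c3 n 2 0 + c3 n 3 0 := by
  rw [c3_succ]
  norm_num [Finset.sum_range_succ]

noncomputable def AGF (s t : ℕ) : PowerSeries ℚ := PowerSeries.mk fun n => (c3 n s t : ℚ)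

lemma coeff_X_mul_mul (B C : PowerSeries ℚ) (n : ℕ) :
    (PowerSeries.coeff n) (X * B * C)
      = ∑ k ∈ Finset.range n, (PowerSeries.coeff k B) * (PowerSeries.coeff (n-1-k) C) := by
  rw [mul_assoc]
  cases n with
  | zero => simp
  | succ n =>
    rw [PowerSeries.coeff_succ_X_mul, PowerSeries.coeff_mul,
      Finset.Nat.sum_antidiagonal_eq_sum_range_succ_mk]
    exact Finset.sum_congr rfl fun k hk => by norm_num

lemma AGF_rev (s t : ℕ) : AGF s t = AGF t s := by
  ext n
  simp [AGF, c3_rev n s t]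

lemma E0 : AGF 0 0 = 1 + X * (AGF 0 0 + AGF 1 0 + AGF 2 0 + AGF 3 0) := by
  ext n
  cases n with
  | zero => simp [AGF, c3_zero]
  | succ n =>
    rw [map_add, PowerSeries.coeff_succ_X_mul]
    simp only [AGF, PowerSeries.coeff_mk, map_add]
    rw [PowerSeries.coeff_one, if_neg (Nat.succ_ne_zero n)]
    rw [c3_e0]
    push_cast
    ring

lemma E1 : AGF 1 0 = X * (AGF 0 0 + AGF 0 1 + AGF 0 2) * AGF 0 0 := by
  ext n
  rw [coeff_X_mul_mul]
  simp only [AGF, map_add, PowerSeries.coeff_mk]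
  rw [fp1 n]
  push_cast
  rfl

lemma E2 : AGF 2 0 = X * (AGF 0 0 + AGF 0 1) * AGF 0 0
    + X * (AGF 0 0 + AGF 0 1 + AGF 0 2) * AGF 1 0 := by
  ext n
  rw [map_add, coeff_X_mul_mul, coeff_X_mul_mul, ← Finset.sum_add_distrib]
  simp only [AGF, map_add, PowerSeries.coeff_mk]
  rw [fp2 n]
  push_cast
  rfl

lemma E3 : AGF 3 0 = X * AGF 0 0 * AGF 0 0
    + X * (AGF 0 0 + AGF 0 1) * AGF 1 0
    + X * (AGF 0 0 + AGF 0 1 + AGF 0 2) * AGF 2 0 := by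
  ext n
  rw [map_add, map_add, coeff_X_mul_mul, coeff_X_mul_mul, coeff_X_mul_mul,
    ← Finset.sum_add_distrib, ← Finset.sum_add_distrib]
  simp only [AGF, map_add, PowerSeries.coeff_mk]
  rw [fp3 n]
  push_cast
  rfl

lemma stepWeight_one (z : ℤ) : stepWeight (fun _ => 1) 1 (fun _ => 1) z = 1 := by
  unfold stepWeight; split_ifs <;> rfl

lemma mc_eq (s t n : ℕ) :
    motzkinCount 3 (fun _ => 1) 1 (fun _ => 1) s t n = c3 n s t := by
  induction n generalizing s with
  | zero =>
    unfold motzkinCount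
    simp only [stepWeight_one, Finset.prod_const_one]
    simp [Nat.cast_inj]
    split_ifs <;> simp_all [c3]
  | succ n ih =>
    rw [c3_succ, show (7:ℕ) = 2*3+1 by norm_num,
      ← Fin.sum_univ_eq_sum_range (fun z => if 3 ≤ s + z then c3 n (s + z - 3) t else 0) (2*3+1)]
    unfold motzkinCount
    simp only [stepWeight_one, Finset.prod_const_one]
    rw [← Equiv.sum_comp (Fin.consEquiv (fun _ => Fin (2*3+1)))]
    rw [Fintype.sum_prod_type]
    refine Finset.sum_congr rfl fun z _ => ?_
    simp only [Fin.consEquiv_apply]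
    rw [← ih (s + (z:ℕ) - 3)]
    unfold motzkinCount
    simp only [stepWeight_one, Finset.prod_const_one]
    have hsum : ∀ (m : ℕ), 0 < m → ∀ (y : Fin n → Fin (2*3+1)),
        (∑ i : Fin (n+1), if (i:ℕ) < m then (((Fin.cons (α := fun _ => Fin (2*3+1)) z y i):ℕ):ℤ) - ((3:ℕ):ℤ) else 0)
          = (((z:ℕ):ℤ) - ((3:ℕ):ℤ))
            + ∑ i : Fin n, if (i:ℕ) < m - 1 then (((y i):ℕ):ℤ) - ((3:ℕ):ℤ) else 0 := by
      intro m hm y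
      rw [Fin.sum_univ_succ]
      simp only [Fin.cons_zero, Fin.cons_succ, Fin.val_zero, Fin.val_succ]
      rw [if_pos hm]
      congr 1
      refine Finset.sum_congr rfl fun i _ => ?_
      simp only [show ∀ p : ℕ, (p + 1 < m) ↔ (p < m - 1) from fun p => by omega]
    have htot : ∀ (y : Fin n → Fin (2*3+1)),
        (∑ i : Fin (n+1), ((((Fin.cons (α := fun _ => Fin (2*3+1)) z y i):ℕ):ℤ) - ((3:ℕ):ℤ)))
          = (((z:ℕ):ℤ) - ((3:ℕ):ℤ)) + ∑ i : Fin n, ((((y i):ℕ):ℤ) - ((3:ℕ):ℤ)) := by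
      intro y
      rw [Fin.sum_univ_succ]
      simp only [Fin.cons_zero, Fin.cons_succ]
    by_cases hz3 : 3 ≤ s + (z:ℕ)
    · rw [if_pos hz3]
      refine Finset.sum_congr rfl fun y _ => ?_
      refine if_congr ?_ rfl rfl
      constructor
      · rintro ⟨hpre, hend⟩
        have h1 := hpre (⟨1, by omega⟩ : Fin (n+1+1))
        rw [hsum 1 one_pos y] at h1
        simp only [show (1:ℕ) - 1 = 0 from rfl, Nat.not_lt_zero, if_false,
          Finset.sum_const_zero, add_zero] at h1
        constructor
        · intro k
          have h2 := hpre k.succ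
          rw [hsum (k.succ : ℕ) (by simp [Fin.val_succ]) y] at h2
          simp only [Fin.val_succ, Nat.add_sub_cancel] at h2
          have hc : ((s + (z:ℕ) - 3 : ℕ) : ℤ) = (s:ℤ) + ((z:ℕ):ℤ) - 3 := by
            push_cast [hz3]; ring
          rw [hc]
          push_cast at h2 ⊢
          linarith [h2]
        · rw [htot y] at hend
          have hc : ((s + (z:ℕ) - 3 : ℕ) : ℤ) = (s:ℤ) + ((z:ℕ):ℤ) - 3 := by
            push_cast [hz3]; ring
          rw [hc]
          push_cast at hend ⊢
          linarith [hend]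
      · rintro ⟨hpre, hend⟩
        have hc : ((s + (z:ℕ) - 3 : ℕ) : ℤ) = (s:ℤ) + ((z:ℕ):ℤ) - 3 := by
          push_cast [hz3]; ring
        constructor
        · intro k
          refine Fin.cases ?_ ?_ k
          · simp
          · intro j
            have h2 := hpre j
            rw [hc] at h2
            rw [hsum (j.succ : ℕ) (by simp [Fin.val_succ]) y]
            simp only [Fin.val_succ, Nat.add_sub_cancel]
            push_cast at h2 ⊢
            linarith [h2]
        · rw [htot y]
          rw [hc] at hend
          push_cast at hend ⊢
          linarith [hend]
    · rw [if_neg hz3]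
      refine Finset.sum_eq_zero fun y _ => ?_
      rw [if_neg]
      rintro ⟨hpre, -⟩
      have h1 := hpre (⟨1, by omega⟩ : Fin (n+1+1))
      rw [hsum 1 one_pos y] at h1
      simp only [show (1:ℕ) - 1 = 0 from rfl, Nat.not_lt_zero, if_false,
        Finset.sum_const_zero, add_zero] at h1
      push_cast at h1
      omega

/-- the generating function `M` of the non-colored Motzkin numbers of rank 3
satisfies `0 = 1 − (1+x)M + 2xM² + x²(1−2x)M⁴ + 2x⁵M⁶ − x⁶(1+x)M⁷ + x⁸M⁸`. -/
theorem motzkin_rank_three_uncolored_gf (M : PowerSeries ℚ)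
    (hM : M = motzkinGF 3 (fun _ => 1) 1 (fun _ => 1) 0 0) :
    (0 : PowerSeries ℚ) =
      1 - (1 + X) * M + 2 * X * M ^ 2 + X ^ 2 * (1 - 2 * X) * M ^ 4 + 2 * X ^ 5 * M ^ 6
        - X ^ 6 * (1 + X) * M ^ 7 + X ^ 8 * M ^ 8 := by
  have hMA : M = AGF 0 0 := by
    rw [hM]
    ext n
    simp [motzkinGF, AGF, mc_eq]
  have h0 := E0
  have h1 : AGF 1 0 = X * (AGF 0 0 + AGF 1 0 + AGF 2 0) * AGF 0 0 := by
    have h := E1; rw [AGF_rev 0 1, AGF_rev 0 2] at h; exact h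
  have h2 : AGF 2 0 = X * (AGF 0 0 + AGF 1 0) * AGF 0 0
      + X * (AGF 0 0 + AGF 1 0 + AGF 2 0) * AGF 1 0 := by
    have h := E2; rw [AGF_rev 0 1, AGF_rev 0 2] at h; exact h
  have h3 : AGF 3 0 = X * AGF 0 0 * AGF 0 0 + X * (AGF 0 0 + AGF 1 0) * AGF 1 0
      + X * (AGF 0 0 + AGF 1 0 + AGF 2 0) * AGF 2 0 := by
    have h := E3; rw [AGF_rev 0 1, AGF_rev 0 2] at h; exact h
  set a1 := AGF 1 0
  set a2 := AGF 2 0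
  set a3 := AGF 3 0
  have key : ((X : PowerSeries ℚ)^5 * (AGF 0 0)^2) *
      (1 - (1 + X) * AGF 0 0 + 2 * X * AGF 0 0 ^ 2 + X ^ 2 * (1 - 2 * X) * AGF 0 0 ^ 4
        + 2 * X ^ 5 * AGF 0 0 ^ 6 - X ^ 6 * (1 + X) * AGF 0 0 ^ 7 + X ^ 8 * AGF 0 0 ^ 8) = 0 := by
    linear_combination
      ((-1) * (X : PowerSeries ℚ)^5 * (AGF 0 0)^2 + 1 * (X : PowerSeries ℚ)^6 * (AGF 0 0)^2 * a1 + 2 * (X : PowerSeries ℚ)^6 * (AGF 0 0)^3 + (-1) * (X : PowerSeries ℚ)^7 * (AGF 0 0)^3 * a1 + 1 * (X : PowerSeries ℚ)^7 * (AGF 0 0)^5 + (-2) * (X : PowerSeries ℚ)^8 * (AGF 0 0)^5 + 1 * (X : PowerSeries ℚ)^9 * (AGF 0 0)^5 * a1 + 1 * (X : PowerSeries ℚ)^9 * (AGF 0 0)^6 + (-1) * (X : PowerSeries ℚ)^10 * (AGF 0 0)^6 * a1 + 1 * (X : PowerSeries ℚ)^10 * (AGF 0 0)^7 + (-1) * (X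 : PowerSeries ℚ)^11 * (AGF 0 0)^8) * h0 +
      (1 * (X : PowerSeries ℚ)^6 * (AGF 0 0) * a2 + (-1) * (X : PowerSeries ℚ)^6 * (AGF 0 0)^3 + (-1) * (X : PowerSeries ℚ)^7 * (AGF 0 0) * a1 * a2 + (-1) * (X : PowerSeries ℚ)^7 * (AGF 0 0) * a1^2 + (-2) * (X : PowerSeries ℚ)^7 * (AGF 0 0)^2 * a2 + (-3) * (X : PowerSeries ℚ)^7 * (AGF 0 0)^2 * a1 + (-2) * (X : PowerSeries ℚ)^7 * (AGF 0 0)^3 + 1 * (X : PowerSeries ℚ)^8 * (AGF 0 0)^2 * a1 * a2 + 2 * (X : PowerSeries ℚ)^8 * (AGF 0 0)^2 * a1^2 + 4 * (X : PowerSeries ℚ)^8 * (AGF 0 0)^3 * a1 + 3 * (X : PowerSeries ℚ)^8 * (AGF 0 0)^4 + (-1) * (X : PowerSeries ℚ)^8 * (AGF 0 0)^4 * a2 + (-1) * (X : PowerSeries ℚ)^8 * (AGF 0 0)^4 * a1 + (-1) * (X : PowerSeries ℚ)^8 * (AGF 0 0)^5 + (-1) * (X : PowerSeries ℚ)^9 *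 (AGF 0 0)^3 * a1^2 + 2 * (X : PowerSeries ℚ)^9 * (AGF 0 0)^4 * a2 + (-1) * (X : PowerSeries ℚ)^9 * (AGF 0 0)^4 * a1 + (-1) * (X : PowerSeries ℚ)^9 * (AGF 0 0)^5 + 1 * (X : PowerSeries ℚ)^9 * (AGF 0 0)^5 * a1 + (-1) * (X : PowerSeries ℚ)^10 * (AGF 0 0)^4 * a1 * a2 + (-1) * (X : PowerSeries ℚ)^10 * (AGF 0 0)^4 * a1^2 + (-1) * (X : PowerSeries ℚ)^10 * (AGF 0 0)^5 * a2 + (-2) * (X : PowerSeries ℚ)^10 * (AGF 0 0)^5 * a1 + (-1) * (X : PowerSeries ℚ)^10 * (AGF 0 0)^6 + 1 * (X : PowerSeries ℚ)^11 * (AGF 0 0)^5 * a1 * a2 + 2 * (X : PowerSeries ℚ)^11 * (AGF 0 0)^5 * a1^2 + (-1) * (X : PowerSeries ℚ)^11 * (AGF 0 0)^6 * a2 + 2 * (X : PowerSeries ℚ)^11 * (AGF 0 0)^6 * a1 + 1 * (X : PowerSeries ℚ)^11 * (AGF 0 0)^7 + (-1) * (X : PowerSeries ℚ)^12 * (AGF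 0 0)^6 * a1^2 + 1 * (X : PowerSeries ℚ)^12 * (AGF 0 0)^7 * a2) * h1 +
      ((-1) * (X : PowerSeries ℚ)^6 * (AGF 0 0) * a1 + (-1) * (X : PowerSeries ℚ)^6 * (AGF 0 0)^2 + 2 * (X : PowerSeries ℚ)^7 * (AGF 0 0)^2 * a1 + 2 * (X : PowerSeries ℚ)^7 * (AGF 0 0)^3 + (-1) * (X : PowerSeries ℚ)^7 * (AGF 0 0)^4 + (-2) * (X : PowerSeries ℚ)^8 * (AGF 0 0)^3 * a1 + (-2) * (X : PowerSeries ℚ)^8 * (AGF 0 0)^4 + 1 * (X : PowerSeries ℚ)^8 * (AGF 0 0)^5 + 1 * (X : PowerSeries ℚ)^9 * (AGF 0 0)^5 + (-1) * (X : PowerSeries ℚ)^9 * (AGF 0 0)^6 + 2 * (X : PowerSeries ℚ)^10 * (AGF 0 0)^5 * a1 + (-2) * (X : PowerSeries ℚ)^11 * (AGF 0 0)^6 * a1 + 1 * (X : PowerSeries ℚ)^12 * (AGF 0 0)^7 * a1) * h2 +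
      ((-1) * (X : PowerSeries ℚ)^6 * (AGF 0 0)^2 + 1 * (X : PowerSeries ℚ)^7 * (AGF 0 0)^2 * a1 + 2 * (X : PowerSeries ℚ)^7 * (AGF 0 0)^3 + (-1) * (X : PowerSeries ℚ)^8 * (AGF 0 0)^3 * a1 + 1 * (X : PowerSeries ℚ)^8 * (AGF 0 0)^5 + (-2) * (X : PowerSeries ℚ)^9 * (AGF 0 0)^5 + 1 * (X : PowerSeries ℚ)^10 * (AGF 0 0)^5 * a1 + 1 * (X : PowerSeries ℚ)^10 * (AGF 0 0)^6 + (-1) * (X : PowerSeries ℚ)^11 * (AGF 0 0)^6 * a1 + 1 * (X : PowerSeries ℚ)^11 * (AGF 0 0)^7 + (-1) * (X : PowerSeries ℚ)^12 * (AGF 0 0)^8) * h3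
  have hne : ((X : PowerSeries ℚ)^5 * (AGF 0 0)^2) ≠ 0 := by
    apply mul_ne_zero (pow_ne_zero _ PowerSeries.X_ne_zero)
    apply pow_ne_zero
    intro hcon
    have h00 : (PowerSeries.constantCoeff) (AGF 0 0) = 1 := by
      simp [AGF, c3]
    rw [hcon, map_zero] at h00
    exact zero_ne_one h00
  have hfin := (mul_eq_zero.mp key).resolve_left hne
  rw [hMA]
  linear_combination -hfin
end

section
/- For rank r = 2 with natural number weights u_1, u_2, l, d_1, d_2, the generating functions A_{i,j}(x) ∈ ℚ⟦x⟧ satisfy the system: A_{0,0} = 1 + lxA_{0,0} + x²A_{0,0}(u_1d_1A_{0,0} + u_1d_2A_{0,1} + u_2d_1A_{1,0} + u_2d_2A_{1,1}); A_{0,1} = xA_{0,0}(u_1A_{0,0} + u_2A_{1,0}); A_{1,0} = xA_{0,0}(d_1A_{0,0} + d_2A_{0,1}); and A_{1,1} = A_{0,0} + xA_{0,1}(d_1A_{0,0} + d_2A_{0,1}). -/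
open PowerSeries Finset

namespace MRT

def dz (a : Fin 5) : ℤ := (a : ℤ) - 2

@[simp] lemma dz0 : dz 0 = -2 := by decide
@[simp] lemma dz1 : dz 1 = -1 := by decide
@[simp] lemma dz2 : dz 2 = 0 := by decide
@[simp] lemma dz3 : dz 3 = 1 := by decide
@[simp] lemma dz4 : dz 4 = 2 := by decide

def cnt (w : Fin 5 → ℕ) (s t : ℤ) : ℕ → ℕ
  | 0 => if 0 ≤ s ∧ s = t then 1 else 0
  | n + 1 => if 0 ≤ s then ∑ a : Fin 5, w a * cnt w (s + dz a) t n else 0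

lemma cnt_neg_left (w : Fin 5 → ℕ) {s : ℤ} (t : ℤ) (hs : s < 0) : ∀ n, cnt w s t n = 0 := by
  intro n
  cases n with
  | zero => simp [cnt]; intro h; omega
  | succ n => simp [cnt]; intro h; omega

lemma cnt_neg_right (w : Fin 5 → ℕ) {t : ℤ} (ht : t < 0) : ∀ n (s : ℤ), cnt w s t n = 0 := by
  intro n
  induction n with
  | zero => intro s; simp [cnt]; intro h1 h2; omega
  | succ n ih => intro s; simp [cnt, ih]

noncomputable def F (w : Fin 5 → ℕ) (s t : ℤ) : PowerSeries ℚ :=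
  PowerSeries.mk fun n => (cnt w s t n : ℚ)

lemma F_neg_left (w : Fin 5 → ℕ) {s : ℤ} (t : ℤ) (hs : s < 0) : F w s t = 0 := by
  ext n; simp [F, cnt_neg_left w t hs]

lemma F_neg_right (w : Fin 5 → ℕ) {t : ℤ} (s : ℤ) (ht : t < 0) : F w s t = 0 := by
  ext n; simp [F, cnt_neg_right w ht]

lemma FS (w : Fin 5 → ℕ) (s t : ℤ) (hs : 0 ≤ s) :
    F w s t = C (if s = t then (1:ℚ) else 0)
      + X * ∑ a : Fin 5, C (w a : ℚ) * F w (s + dz a) t := by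
  ext n
  cases n with
  | zero =>
    simp [F, cnt, coeff_zero_eq_constantCoeff, hs]
  | succ n =>
    rw [map_add, coeff_succ_X_mul, map_sum]
    simp only [coeff_C_mul, F, coeff_mk, coeff_C]
    simp [cnt, hs]

lemma err_zero (w : Fin 5 → ℕ) (E : ℤ → PowerSeries ℚ)
    (h : ∀ s : ℤ, E s = 0 ∨ E s = X * ∑ a : Fin 5, C (w a : ℚ) * E (s + dz a)) :
    ∀ s, E s = 0 := by
  have key : ∀ n (s : ℤ), coeff n (E s) = 0 := by
    intro n
    induction n with
    | zero =>
      intro s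
      rcases h s with h' | h'
      · simp [h']
      · rw [h', coeff_zero_eq_constantCoeff]
        simp
    | succ n ih =>
      intro s
      rcases h s with h' | h'
      · simp [h']
      · rw [h', coeff_succ_X_mul, map_sum]
        simp only [coeff_C_mul, ih, mul_zero, Finset.sum_const_zero]
  intro s; ext n; simp [key]

lemma G1 (w : Fin 5 → ℕ) (s : ℤ) :
    F w s 1 = F w (s-1) 0
      + X * F w s 0 * (C (w 3 : ℚ) * F w 0 0 + C (w 4 : ℚ) * F w 1 0) := by
  have main := err_zero w
    (fun s => F w s 1 - F w (s-1) 0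
      - X * F w s 0 * (C (w 3 : ℚ) * F w 0 0 + C (w 4 : ℚ) * F w 1 0)) ?_ s
  · linear_combination main
  intro s
  rcases lt_trichotomy s 0 with hs | hs | hs
  · left
    beta_reduce
    rw [F_neg_left w _ hs, F_neg_left w _ (by omega : s - 1 < 0), F_neg_left w _ hs]
    ring
  · right
    subst hs
    have z1 : F w (-1:ℤ) 0 = 0 := F_neg_left w 0 (by norm_num)
    have z2 : F w (-2:ℤ) 0 = 0 := F_neg_left w 0 (by norm_num)
    have z3 : F w (-3:ℤ) 0 = 0 := F_neg_left w 0 (by norm_num)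
    have z4 : F w (-1:ℤ) 1 = 0 := F_neg_left w 1 (by norm_num)
    have z5 : F w (-2:ℤ) 1 = 0 := F_neg_left w 1 (by norm_num)
    have h01 := FS w 0 1 le_rfl
    have h00 := FS w 0 0 le_rfl
    simp only [Fin.sum_univ_five, dz0, dz1, dz2, dz3, dz4] at h01 h00 ⊢
    norm_num at h01 h00 ⊢
    simp only [z1, z2, z3, z4, z5] at h01 h00 ⊢
    linear_combination h01 - X * (((w 3 : ℕ) : ℚ⟦X⟧) * F w 0 0 + ((w 4 : ℕ) : ℚ⟦X⟧) * F w 1 0) * h00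
  · right
    have h1 := FS w s 1 (by omega)
    have h2 := FS w (s-1) 0 (by omega)
    have h3 := FS w s 0 (by omega)
    have e12 : (if s = (1:ℤ) then (1:ℚ) else 0) = (if s - 1 = 0 then 1 else 0) := by
      split_ifs with p q q
      · rfl
      · omega
      · omega
      · rfl
    have e3 : (if s = (0:ℤ) then (1:ℚ) else 0) = 0 := by
      rw [if_neg (by omega)]
    beta_reduce
    rw [h1, h2, h3, e12, e3]
    simp only [Fin.sum_univ_five, dz0, dz1, dz2, dz3, dz4, map_zero]
    ring_nf

lemma G2 (w : Fin 5 → ℕ) (t : ℤ) :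
    ∀ s : ℤ, s ≠ 0 →
      F w s t = F w (s-1) (t-1)
        + X * (C (w 1 : ℚ) * F w (s-1) 0 + C (w 0 : ℚ) * F w (s-1) 1) * F w 0 t := by
  have main := err_zero w
    (fun s => if s = 0 then 0 else
      F w s t - F w (s-1) (t-1)
        - X * (C (w 1 : ℚ) * F w (s-1) 0 + C (w 0 : ℚ) * F w (s-1) 1) * F w 0 t) ?_
  · intro s hs
    have h := main s
    simp only [if_neg hs] at h
    linear_combination h
  intro s
  rcases lt_trichotomy s 0 with hs | hs | hs
  · left
    simp only [if_neg (by omega : ¬ s = 0)]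
    rw [F_neg_left w t hs, F_neg_left w (t-1) (by omega : s - 1 < 0),
      F_neg_left w 0 (by omega : s - 1 < 0), F_neg_left w 1 (by omega : s - 1 < 0)]
    ring
  · left
    simp only [if_pos hs]
  · right
    by_cases e1 : s = 1
    · subst e1
      have zA : F w (-1:ℤ) t = 0 := F_neg_left w t (by norm_num)
      have zB : F w (-2:ℤ) (t-1) = 0 := F_neg_left w (t-1) (by norm_num)
      have zC : F w (-1:ℤ) (t-1) = 0 := F_neg_left w (t-1) (by norm_num)
      have zD : F w (-2:ℤ) 0 = 0 := F_neg_left w 0 (by norm_num)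
      have zE : F w (-1:ℤ) 0 = 0 := F_neg_left w 0 (by norm_num)
      have zF : F w (-2:ℤ) 1 = 0 := F_neg_left w 1 (by norm_num)
      have zG : F w (-1:ℤ) 1 = 0 := F_neg_left w 1 (by norm_num)
      have hst := FS w 1 t (by norm_num)
      have hG := FS w 0 (t-1) le_rfl
      have hN0 := FS w 0 0 le_rfl
      have hN1 := FS w 0 1 le_rfl
      have eG : (if (0:ℤ) = t - 1 then (1:ℚ⟦X⟧) else 0) = (if (1:ℤ) = t then 1 else 0) := by
        split_ifs <;> first | rfl | omega
      simp only [Fin.sum_univ_five, dz0, dz1, dz2, dz3, dz4] at hst hG hN0 hN1 ⊢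
      norm_num at hst hG hN0 hN1 ⊢
      rw [eG] at hG
      simp only [zA, zB, zC, zD, zE, zF, zG] at hst hG hN0 hN1 ⊢
      linear_combination hst - hG
        - X * F w 0 t * (((w 1 : ℕ) : ℚ⟦X⟧) * hN0 + ((w 0 : ℕ) : ℚ⟦X⟧) * hN1)
    · by_cases e2 : s = 2
      · subst e2
        have zC : F w (-1:ℤ) (t-1) = 0 := F_neg_left w (t-1) (by norm_num)
        have zE : F w (-1:ℤ) 0 = 0 := F_neg_left w 0 (by norm_num)
        have zG : F w (-1:ℤ) 1 = 0 := F_neg_left w 1 (by norm_num)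
        have hst := FS w 2 t (by norm_num)
        have hG := FS w 1 (t-1) (by norm_num)
        have hN0 := FS w 1 0 (by norm_num)
        have hN1 := FS w 1 1 (by norm_num)
        have eG : (if (1:ℤ) = t - 1 then (1:ℚ⟦X⟧) else 0) = (if (2:ℤ) = t then 1 else 0) := by
          split_ifs <;> first | rfl | omega
        simp only [Fin.sum_univ_five, dz0, dz1, dz2, dz3, dz4] at hst hG hN0 hN1 ⊢
        norm_num at hst hG hN0 hN1 ⊢
        rw [eG] at hG
        simp only [zC, zE, zG] at hst hG hN0 hN1 ⊢
        linear_combination hst - hG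
          - X * F w 0 t * (((w 1 : ℕ) : ℚ⟦X⟧) * hN0 + ((w 0 : ℕ) : ℚ⟦X⟧) * hN1)
      · have h3s : 3 ≤ s := by omega
        have h1 := FS w s t (by omega)
        have h2 := FS w (s-1) (t-1) (by omega)
        have h3 := FS w (s-1) 0 (by omega)
        have h4 := FS w (s-1) 1 (by omega)
        have e2' : (if s - 1 = t - 1 then (1:ℚ) else 0) = (if s = t then 1 else 0) := by
          split_ifs <;> first | rfl | omega
        have e3' : (if s - 1 = (0:ℤ) then (1:ℚ) else 0) = 0 := by rw [if_neg (by omega)]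
        have e4' : (if s - 1 = (1:ℤ) then (1:ℚ) else 0) = 0 := by rw [if_neg (by omega)]
        rw [e2'] at h2
        rw [e3'] at h3
        rw [e4'] at h4
        simp only [Fin.sum_univ_five, dz0, dz1, dz2, dz3, dz4] at h1 h2 h3 h4 ⊢
        rw [if_neg (show ¬ s = 0 by omega), if_neg (show ¬ s + -2 = 0 by omega),
          if_neg (show ¬ s + -1 = 0 by omega), if_neg (show ¬ s + 0 = 0 by omega),
          if_neg (show ¬ s + 1 = 0 by omega), if_neg (show ¬ s + 2 = 0 by omega)]
        rw [h1, h2, h3, h4]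
        simp only [map_zero]
        ring_nf


lemma cnt_eq (w : Fin 5 → ℕ) : ∀ (n : ℕ) (s t : ℤ),
    (∑ f : Fin n → Fin 5,
      if (∀ k : Fin (n + 1),
            0 ≤ s + ∑ i : Fin n, if (i : ℕ) < (k : ℕ) then ((f i : ℤ) - 2) else 0) ∧
          s + (∑ i : Fin n, ((f i : ℤ) - 2)) = t
      then ∏ i : Fin n, w (f i) else 0) = cnt w s t n := by
  intro n
  induction n with
  | zero =>
    intro s t
    simp [cnt]
  | succ n ih =>
    intro s t
    rw [← Equiv.sum_comp (Fin.consEquiv (fun _ => Fin 5))]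
    have key : ∀ (a : Fin 5) (g : Fin n → Fin 5),
        ((∀ k : Fin (n + 2),
            0 ≤ s + ∑ i : Fin (n+1), if (i : ℕ) < (k : ℕ) then (((Fin.cons a g : Fin (n+1) → Fin 5) i : ℤ) - 2) else 0) ∧
          s + (∑ i : Fin (n+1), (((Fin.cons a g : Fin (n+1) → Fin 5) i : ℤ) - 2)) = t)
        ↔ (0 ≤ s ∧ ((∀ k : Fin (n + 1),
            0 ≤ (s + ((a : ℤ) - 2)) + ∑ i : Fin n, if (i : ℕ) < (k : ℕ) then ((g i : ℤ) - 2) else 0) ∧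
          (s + ((a : ℤ) - 2)) + (∑ i : Fin n, ((g i : ℤ) - 2)) = t)) := by
      intro a g
      have hsum : ∑ i : Fin (n+1), (((Fin.cons a g : Fin (n+1) → Fin 5) i : ℤ) - 2)
          = ((a : ℤ) - 2) + ∑ i : Fin n, ((g i : ℤ) - 2) := by
        rw [Fin.sum_univ_succ]
        simp
      have hpart : ∀ j : Fin (n+1),
          (∑ i : Fin (n+1), if (i : ℕ) < (j.succ : ℕ) then (((Fin.cons a g : Fin (n+1) → Fin 5) i : ℤ) - 2) else 0)
          = ((a : ℤ) - 2) + ∑ i : Fin n, if (i : ℕ) < (j : ℕ) then ((g i : ℤ) - 2) else 0 := by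
        intro j
        rw [Fin.sum_univ_succ]
        simp [Fin.val_succ, Nat.succ_lt_succ_iff]
      rw [Fin.forall_fin_succ]
      have h0 : (∑ i : Fin (n+1), if (i : ℕ) < (((0 : Fin (n+2))) : ℕ) then (((Fin.cons a g : Fin (n+1) → Fin 5) i : ℤ) - 2) else 0) = 0 := by
        simp
      rw [h0, hsum]
      constructor
      · rintro ⟨⟨hk0, hks⟩, htot⟩
        refine ⟨by simpa using hk0, fun k => ?_, by omega⟩
        have := hks k
        rw [hpart k] at this
        omega
      · rintro ⟨hs0, hks, htot⟩
        refine ⟨⟨by simpa using hs0, fun k => ?_⟩, by omega⟩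
        rw [hpart k]
        have := hks k
        omega
    have hprod : ∀ (a : Fin 5) (g : Fin n → Fin 5),
        (∏ i : Fin (n+1), w ((Fin.cons a g : Fin (n+1) → Fin 5) i)) = w a * ∏ i : Fin n, w (g i) := by
      intro a g
      rw [Fin.prod_univ_succ]
      simp
    rw [Fintype.sum_prod_type]
    refine Eq.trans (Finset.sum_congr rfl fun a _ => Finset.sum_congr rfl fun g _ =>
      if_congr (key a g) (hprod a g) rfl) ?_
    by_cases hs : 0 ≤ s
    · have hc : cnt w s t (n+1) = ∑ a : Fin 5, w a * cnt w (s + ((a : ℤ) - 2)) t n := by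
        rw [cnt, if_pos hs]; rfl
      rw [hc]
      refine Finset.sum_congr rfl fun a _ => ?_
      rw [← ih (s + ((a:ℤ)-2)) t, Finset.mul_sum]
      refine Finset.sum_congr rfl fun g _ => ?_
      simp only [hs, true_and, mul_ite, mul_zero]
    · rw [cnt, if_neg hs]
      simp [hs]


lemma GF_eq (u' : ℕ → ℕ) (l' : ℕ) (d' : ℕ → ℕ) (s t : ℕ) :
    motzkinGF 2 u' l' d' s t = F (fun a => stepWeight u' l' d' ((a : ℤ) - 2)) (s : ℤ) (t : ℤ) := by
  ext n
  simp only [motzkinGF, F, coeff_mk, Nat.cast_inj]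
  rw [← cnt_eq]
  rfl

end MRT

open MRT

/-- the rank-2 system of equations for the generating functions `A_{i,j}`. -/
theorem motzkin_rank_two_system (u₁ u₂ l d₁ d₂ : ℕ)
    (A : ℕ → ℕ → PowerSeries ℚ)
    (hA : ∀ s t, A s t = motzkinGF 2 (fun p => if p = 1 then u₁ else if p = 2 then u₂ else 0) l
      (fun q => if q = 1 then d₁ else if q = 2 then d₂ else 0) s t) :
    A 0 0 = 1 + C (l : ℚ) * X * A 0 0
        + X ^ 2 * A 0 0 *
            (C ((u₁ : ℚ) * (d₁ : ℚ)) * A 0 0 + C ((u₁ : ℚ) * (d₂ : ℚ)) * A 0 1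
              + C ((u₂ : ℚ) * (d₁ : ℚ)) * A 1 0 + C ((u₂ : ℚ) * (d₂ : ℚ)) * A 1 1) ∧
      A 0 1 = X * A 0 0 * (C (u₁ : ℚ) * A 0 0 + C (u₂ : ℚ) * A 1 0) ∧
      A 1 0 = X * A 0 0 * (C (d₁ : ℚ) * A 0 0 + C (d₂ : ℚ) * A 0 1) ∧
      A 1 1 = A 0 0 + X * A 0 1 * (C (d₁ : ℚ) * A 0 0 + C (d₂ : ℚ) * A 0 1) := by
  set u' : ℕ → ℕ := fun p => if p = 1 then u₁ else if p = 2 then u₂ else 0 with hu'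
  set d' : ℕ → ℕ := fun q => if q = 1 then d₁ else if q = 2 then d₂ else 0 with hd'
  set w : Fin 5 → ℕ := fun a => stepWeight u' l d' ((a : ℤ) - 2) with hwdef
  have hb : ∀ s t : ℕ, A s t = F w (s : ℤ) (t : ℤ) := by
    intro s t; rw [hA s t, GF_eq]
  have hw0 : w 0 = d₂ := by simp [hwdef, stepWeight, hd']
  have hw1 : w 1 = d₁ := by simp [hwdef, stepWeight, hd']
  have hw2 : w 2 = l := by simp [hwdef, stepWeight]
  have hw3 : w 3 = u₁ := by simp [hwdef, stepWeight, hu', show ((3:Fin 5):ℕ) = 3 from rfl]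
  have hw4 : w 4 = u₂ := by simp [hwdef, stepWeight, hu', show ((4:Fin 5):ℕ) = 4 from rfl]
  have z1 : F w (-2:ℤ) 0 = 0 := F_neg_left w 0 (by norm_num)
  have z2 : F w (-1:ℤ) 0 = 0 := F_neg_left w 0 (by norm_num)
  have z3 : F w 0 (-1:ℤ) = 0 := F_neg_right w 0 (by norm_num)
  have z4 : F w 1 (-1:ℤ) = 0 := F_neg_right w 1 (by norm_num)
  have hS00 := FS w 0 0 le_rfl
  simp only [Fin.sum_univ_five, dz0, dz1, dz2, dz3, dz4] at hS00
  norm_num at hS00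
  try simp only [z1, z2] at hS00
  have hS01 := G1 w 0
  norm_num at hS01
  try simp only [z2] at hS01
  have hS10 := G2 w 0 1 one_ne_zero
  norm_num at hS10
  try simp only [z3] at hS10
  have hS11 := G2 w 1 1 one_ne_zero
  norm_num at hS11
  have hS20 := G2 w 0 2 two_ne_zero
  norm_num at hS20
  try simp only [z4] at hS20
  simp only [hw0, hw1, hw2, hw3, hw4] at hS00 hS01 hS10 hS11 hS20
  try simp only [map_natCast] at hS00 hS01 hS10 hS11 hS20
  rw [hb 0 0, hb 0 1, hb 1 0, hb 1 1]
  try simp only [Nat.cast_zero, Nat.cast_one]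
  refine ⟨?_, ?_, ?_, ?_⟩
  · simp only [map_mul, map_natCast]
    linear_combination hS00 + X * (u₁ : ℚ⟦X⟧) * hS10 + X * (u₂ : ℚ⟦X⟧) * hS20
  · simp only [map_natCast]
    linear_combination hS01
  · simp only [map_natCast]
    linear_combination hS10
  · simp only [map_natCast]
    linear_combination hS11
end

section
/- For rank r = 3 with all weights equal to 1, the generating functions B_{i,j}(x) ∈ ℚ⟦x⟧ satisfy the system: B_{0,0} = 1 + xB_{0,0} + x²B_{0,0}(B_{0,0} + 2B_{1,0} + 2B_{2,0} + 2B_{2,1} + B_{1,1} + B_{2,2}); B_{1,0} = xB_{0,0}(B_{0,0} + B_{1,0} + B_{2,0}); B_{2,0} = xB_{0,0}(B_{1,0} + B_{1,1} + B_{2,1}); B_{1,1} = B_{0,0} + xB_{1,0}(B_{0,0} + B_{1,0} + B_{2,0}); B_{2,1} = B_{1,0} + xB_{1,0}(B_{1,0} + B_{1,1} + B_{2,1}); and B_{2,2} = B_{1,1} + xB_{2,0}(B_{1,0} + B_{1,1} + B_{2,1}). -/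
open PowerSeries Finset

/-- number of rank-3 paths from `s` to `t` of length `n`, by first-step recursion -/
def pD : ℕ → ℕ → ℕ → ℕ
  | s, t, 0 => if s = t then 1 else 0
  | s, t, n+1 => ∑ j ∈ range 7, if 3 ≤ s + j then pD (s + j - 3) t n else 0

/-- last-step recursion -/
lemma pD_last (s t n : ℕ) :
    pD s t (n+1) = ∑ j ∈ range 7, if 3 ≤ t + j then pD s (t + j - 3) n else 0 := by
  induction n generalizing s t with
  | zero =>
      rw [pD, ← Finset.sum_range_reflect]
      refine Finset.sum_congr rfl fun j hj => ?_
      simp only [mem_range] at hj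
      simp only [pD]
      split_ifs <;> omega
  | succ n ih =>
      rw [pD]
      have : ∀ j, (if 3 ≤ s + j then pD (s + j - 3) t (n+1) else 0)
          = ∑ i ∈ range 7, if 3 ≤ s + j then (if 3 ≤ t + i then pD (s + j - 3) (t + i - 3) n else 0) else 0 := by
        intro j
        split_ifs with h
        · exact ih _ _
        · simp
      simp_rw [this]
      rw [Finset.sum_comm]
      refine Finset.sum_congr rfl fun i _ => ?_
      by_cases h : 3 ≤ t + i
      · simp only [if_pos h, pD]
      · simp [if_neg h]

lemma pD_symm (s t n : ℕ) : pD s t n = pD t s n := by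
  induction n generalizing s t with
  | zero => simp only [pD]; split_ifs <;> simp_all
  | succ n ih =>
      rw [pD, pD_last]
      refine Finset.sum_congr rfl fun j _ => ?_
      split_ifs with h
      · exact ih _ _
      · rfl

lemma sum7_shift (s : ℕ) (hs : 1 ≤ s) (g : ℕ → ℕ) :
    ∑ j ∈ range 7, (if 4 ≤ s + j then g (s + j - 4) else 0)
      = ∑ j ∈ range 7, (if 3 ≤ (s-1) + j then g ((s-1) + j - 3) else 0) := by
  refine Finset.sum_congr rfl fun j _ => ?_
  have h1 : (4 ≤ s + j) ↔ (3 ≤ (s-1) + j) := by omega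
  by_cases h : 4 ≤ s + j
  · rw [if_pos h, if_pos (h1.mp h)]
    congr 1; omega
  · rw [if_neg h, if_neg (fun hc => h (h1.mpr hc))]

lemma sum7_single (s : ℕ) (hs : 1 ≤ s) (x : ℕ) :
    ∑ j ∈ range 7, (if s + j = 3 then x else 0) = if s ≤ 3 then x else 0 := by
  by_cases h : s ≤ 3
  · rw [if_pos h]
    have : ∀ j ∈ range 7, (if s + j = 3 then x else 0) = if j = 3 - s then x else 0 := by
      intro j _; congr 1; simp; omega
    rw [Finset.sum_congr rfl this, Finset.sum_ite_eq' (range 7) (3-s) (fun _ => x)]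
    rw [if_pos (by simp; omega)]
  · rw [if_neg h]
    have : ∀ j ∈ range 7, (if s + j = 3 then x else 0) = 0 := by
      intro j _; rw [if_neg (by omega)]
    rw [Finset.sum_congr rfl this, Finset.sum_const_zero]

/-- first-passage decomposition -/
lemma pD_fp (t : ℕ) : ∀ n s, 1 ≤ s →
    pD s t n = (if 1 ≤ t then pD (s-1) (t-1) n else 0)
      + ∑ m ∈ range n, (∑ i ∈ range 3, pD (s-1) i m) * pD 0 t (n-1-m) := by
  intro n
  induction n with
  | zero =>
      intro s hs
      simp only [pD, range_zero, Finset.sum_empty, add_zero]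
      split_ifs <;> omega
  | succ n ih =>
      intro s hs
      -- expand LHS
      have lhs : pD s t (n+1) = ∑ j ∈ range 7,
          ((if s + j = 3 then pD 0 t n else 0)
          + ((if 4 ≤ s + j then (if 1 ≤ t then pD (s+j-4) (t-1) n else 0) else 0)
          + (if 4 ≤ s + j then ∑ m ∈ range n, (∑ i ∈ range 3, pD (s+j-4) i m) * pD 0 t (n-1-m) else 0))) := by
        rw [pD]
        refine Finset.sum_congr rfl fun j _ => ?_
        by_cases h3 : 3 ≤ s + j
        · rw [if_pos h3]
          by_cases h4 : 4 ≤ s + j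
          · rw [if_neg (by omega), if_pos h4, if_pos h4, zero_add]
            have := ih (s + j - 3) (by omega)
            rw [this]
            have e : s + j - 3 - 1 = s + j - 4 := by omega
            rw [e]
          · -- s + j = 3
            rw [if_pos (by omega), if_neg h4, if_neg h4]
            have hsj : s + j - 3 = 0 := by omega
            rw [hsj]; simp
        · rw [if_neg h3, if_neg (by omega), if_neg (by omega), if_neg (by omega)]
      rw [lhs, Finset.sum_add_distrib, Finset.sum_add_distrib]
      -- name the three pieces
      have hite : ∀ (c : Prop) [Decidable c] (S : Finset ℕ) (f : ℕ → ℕ),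
          (if c then ∑ i ∈ S, f i else 0) = ∑ i ∈ S, if c then f i else 0 := by
        intro c _ S f; split_ifs <;> simp
      have hA : ∑ j ∈ range 7, (if s + j = 3 then pD 0 t n else 0)
          = if s ≤ 3 then pD 0 t n else 0 := sum7_single s hs _
      have hB : ∑ j ∈ range 7, (if 4 ≤ s + j then (if 1 ≤ t then pD (s+j-4) (t-1) n else 0) else 0)
          = if 1 ≤ t then pD (s-1) (t-1) (n+1) else 0 := by
        by_cases ht : 1 ≤ t
        · simp only [if_pos ht]
          rw [sum7_shift s hs (fun h => pD h (t-1) n), pD]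
        · simp [ht]
      have hc : ∀ m, (∑ i ∈ range 3, pD (s-1) i (m+1))
          = ∑ j ∈ range 7, (if 3 ≤ (s-1) + j then ∑ i ∈ range 3, pD ((s-1)+j-3) i m else 0) := by
        intro m
        simp only [pD]
        rw [Finset.sum_comm]
        refine Finset.sum_congr rfl fun j _ => (hite _ _ _).symm
      have hC : ∑ j ∈ range 7, (if 4 ≤ s + j then
            ∑ m ∈ range n, (∑ i ∈ range 3, pD (s+j-4) i m) * pD 0 t (n-1-m) else 0)
          = ∑ m ∈ range n, (∑ i ∈ range 3, pD (s-1) i (m+1)) * pD 0 t (n-1-m) := by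
        simp_rw [hite]
        rw [Finset.sum_comm]
        refine Finset.sum_congr rfl fun m _ => ?_
        have : ∀ j, (if 4 ≤ s + j then (∑ i ∈ range 3, pD (s+j-4) i m) * pD 0 t (n-1-m) else 0)
            = (if 4 ≤ s + j then (∑ i ∈ range 3, pD (s+j-4) i m) else 0) * pD 0 t (n-1-m) := by
          intro j; split_ifs <;> simp
        simp_rw [this, ← Finset.sum_mul]
        rw [sum7_shift s hs (fun h => ∑ i ∈ range 3, pD h i m), ← hc]
      rw [hA, hB, hC]
      -- now handle RHS
      rw [Finset.sum_range_succ']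
      have h0 : (∑ i ∈ range 3, pD (s-1) i 0) * pD 0 t (n + 1 - 1 - 0)
          = if s ≤ 3 then pD 0 t n else 0 := by
        have : (∑ i ∈ range 3, pD (s-1) i 0) = if s ≤ 3 then 1 else 0 := by
          simp only [pD, Finset.sum_range_succ, Finset.sum_range_zero]
          split_ifs <;> omega
        rw [this]
        split_ifs <;> simp
      rw [h0]
      have hsh : ∀ m, (∑ i ∈ range 3, pD (s-1) i (m+1)) * pD 0 t (n + 1 - 1 - (m+1))
          = (∑ i ∈ range 3, pD (s-1) i (m+1)) * pD 0 t (n-1-m) := by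
        intro m; congr 2; omega
      simp_rw [hsh]
      ring

def mc (t n : ℕ) (σ : ℤ) : ℕ :=
  ∑ f : Fin n → Fin 7,
    if (∀ k : Fin (n + 1),
          0 ≤ σ + ∑ i : Fin n, if (i : ℕ) < (k : ℕ) then ((f i : ℤ) - 3) else 0) ∧
        σ + (∑ i : Fin n, ((f i : ℤ) - 3)) = t
    then 1 else 0

lemma motzkinCount_eq_mc (s t n : ℕ) :
    motzkinCount 3 (fun _ => 1) 1 (fun _ => 1) s t n = mc t n s := by
  unfold motzkinCount mc
  norm_num [stepWeight_one]

lemma mc_neg (t n : ℕ) (σ : ℤ) (hσ : σ < 0) : mc t n σ = 0 := by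
  unfold mc
  refine Finset.sum_eq_zero fun f _ => ?_
  rw [if_neg]
  rintro ⟨h1, -⟩
  have := h1 0
  simp at this
  omega

lemma mc_succ (t n : ℕ) (σ : ℤ) (hσ : 0 ≤ σ) :
    mc t (n+1) σ = ∑ a : Fin 7, mc t n (σ + a - 3) := by
  unfold mc
  rw [← Equiv.sum_comp (Fin.consEquiv (fun _ : Fin (n+1) => Fin 7)), Fintype.sum_prod_type]
  refine Finset.sum_congr rfl fun a _ => Finset.sum_congr rfl fun f' _ => ?_
  simp only [Fin.consEquiv_apply]
  congr 1
  have hsum : (∑ i : Fin (n+1), (((Fin.cons (α := fun _ => Fin 7) a f' i) : ℤ) - 3))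
      = ((a : ℤ) - 3) + ∑ i : Fin n, (((f' i : Fin 7) : ℤ) - 3) := by
    rw [Fin.sum_univ_succ]
    simp only [Fin.cons_zero, Fin.cons_succ]
  have hpre : ∀ k : Fin (n+1),
      (∑ i : Fin (n+1), if (i : ℕ) < (k.succ : ℕ) then ((Fin.cons (α := fun _ => Fin 7) a f' i) : ℤ) - 3 else 0)
      = ((a : ℤ) - 3) + ∑ i : Fin n, (if (i : ℕ) < (k : ℕ) then ((f' i : Fin 7) : ℤ) - 3 else 0) := by
    intro k
    rw [Fin.sum_univ_succ]
    congr 1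
    · simp
  rw [eq_iff_iff]
  constructor
  · rintro ⟨h1, h2⟩
    refine ⟨fun k => ?_, ?_⟩
    · have := h1 k.succ
      rw [hpre k] at this
      linarith
    · rw [hsum] at h2; linarith
  · rintro ⟨h1, h2⟩
    refine ⟨fun k => ?_, ?_⟩
    · rcases Fin.eq_zero_or_eq_succ k with rfl | ⟨k', rfl⟩
      · simpa using hσ
      · rw [hpre k']
        have := h1 k'
        linarith
    · rw [hsum]; linarith

lemma mc_eq_pD (t : ℕ) : ∀ (n : ℕ) (σ : ℤ), 0 ≤ σ → mc t n σ = pD σ.toNat t n := by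
  intro n
  induction n with
  | zero =>
      intro σ hσ
      simp only [mc, pD]
      rw [Fintype.sum_eq_single (fun _ : Fin 0 => (0 : Fin 7)) (fun f => by
        have : f = (fun _ : Fin 0 => (0 : Fin 7)) := funext fun i => i.elim0
        exact fun h => absurd this h)]
      simp [hσ]
      split_ifs <;> omega
  | succ n ih =>
      intro σ hσ
      rw [mc_succ t n σ hσ, pD,
        Fin.sum_univ_eq_sum_range (fun a => mc t n (σ + a - 3)) 7]
      refine Finset.sum_congr rfl fun j hj => ?_
      simp only [mem_range] at hj
      by_cases h : 3 ≤ σ.toNat + j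
      · rw [if_pos h, ih (σ + j - 3) (by omega)]
        congr 1
        omega
      · rw [if_neg h, mc_neg _ _ _ (by omega)]

lemma motzkinCount_eq_pD (s t n : ℕ) :
    motzkinCount 3 (fun _ => 1) 1 (fun _ => 1) s t n = pD s t n := by
  rw [motzkinCount_eq_mc, mc_eq_pD t n s (Int.natCast_nonneg s), Int.toNat_natCast]


noncomputable def bb (s t : ℕ) : PowerSeries ℚ := PowerSeries.mk fun n => (pD s t n : ℚ)

lemma bb_symm (s t : ℕ) : bb s t = bb t s := by
  ext n; simp [bb, pD_symm]

/-- series form of the first-step recursion at `s = 0` -/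
lemma bb_first : bb 0 0 = 1 + X * (bb 0 0 + bb 1 0 + bb 2 0 + bb 3 0) := by
  ext n
  cases n with
  | zero => simp [bb, pD]
  | succ n =>
      rw [map_add, coeff_succ_X_mul, PowerSeries.coeff_one, if_neg (Nat.succ_ne_zero n)]
      simp only [bb, coeff_mk, map_add, zero_add]
      rw [show pD 0 0 (n+1) = ∑ j ∈ range 7, if 3 ≤ 0 + j then pD (0 + j - 3) 0 n else 0 from rfl]
      simp [Finset.sum_range_succ]

/-- series form of the first-passage decomposition -/
lemma bb_fp (s t : ℕ) (hs : 1 ≤ s) :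
    bb s t = (if 1 ≤ t then bb (s-1) (t-1) else 0)
      + X * ((bb (s-1) 0 + bb (s-1) 1 + bb (s-1) 2) * bb 0 t) := by
  ext n
  rw [map_add, apply_ite (coeff n), map_zero]
  cases n with
  | zero =>
      rw [coeff_zero_X_mul, add_zero]
      have h := pD_fp t 0 s hs
      simp only [range_zero, Finset.sum_empty, add_zero] at h
      simp only [bb, coeff_mk]
      rw [h]
      split_ifs <;> simp
  | succ n =>
      rw [coeff_succ_X_mul, coeff_mul, Finset.Nat.sum_antidiagonal_eq_sum_range_succ_mk]
      have h := pD_fp t (n+1) s hs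
      simp only [bb, coeff_mk, map_add]
      rw [h]
      push_cast
      congr 1
      simp [Finset.sum_range_succ]

theorem bb_system :
    bb 0 0 = 1 + X * bb 0 0
        + X ^ 2 * bb 0 0 * (bb 0 0 + 2 * bb 1 0 + 2 * bb 2 0 + 2 * bb 2 1 + bb 1 1 + bb 2 2) ∧
      bb 1 0 = X * bb 0 0 * (bb 0 0 + bb 1 0 + bb 2 0) ∧
      bb 2 0 = X * bb 0 0 * (bb 1 0 + bb 1 1 + bb 2 1) ∧
      bb 1 1 = bb 0 0 + X * bb 1 0 * (bb 0 0 + bb 1 0 + bb 2 0) ∧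
      bb 2 1 = bb 1 0 + X * bb 1 0 * (bb 1 0 + bb 1 1 + bb 2 1) ∧
      bb 2 2 = bb 1 1 + X * bb 2 0 * (bb 1 0 + bb 1 1 + bb 2 1) := by
  have e10 := bb_fp 1 0 (by norm_num)
  have e20 := bb_fp 2 0 (by norm_num)
  have e30 := bb_fp 3 0 (by norm_num)
  have e11 := bb_fp 1 1 (by norm_num)
  have e21 := bb_fp 2 1 (by norm_num)
  have e22 := bb_fp 2 2 (by norm_num)
  norm_num at e10 e20 e30 e11 e21 e22
  rw [bb_symm 0 1, bb_symm 0 2] at e10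
  rw [bb_symm 1 2] at e20
  rw [bb_symm 0 1, bb_symm 0 2] at e11
  rw [bb_symm 0 1, bb_symm 1 2] at e21
  rw [bb_symm 0 2, bb_symm 1 2] at e22
  have s1 := bb_first
  refine ⟨?_, ?_, ?_, ?_, ?_, ?_⟩
  · linear_combination s1 + X * e10 + X * e20 + X * e30
  · linear_combination e10
  · linear_combination e20
  · linear_combination e11
  · linear_combination e21
  · linear_combination e22

/-- the rank-3 (all weights 1) system of equations for the generating
functions `B_{i,j}`. -/
theorem motzkin_rank_three_system (B : ℕ → ℕ → PowerSeries ℚ)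
    (hB : ∀ s t, B s t = motzkinGF 3 (fun _ => 1) 1 (fun _ => 1) s t) :
    B 0 0 = 1 + X * B 0 0
        + X ^ 2 * B 0 0 * (B 0 0 + 2 * B 1 0 + 2 * B 2 0 + 2 * B 2 1 + B 1 1 + B 2 2) ∧
      B 1 0 = X * B 0 0 * (B 0 0 + B 1 0 + B 2 0) ∧
      B 2 0 = X * B 0 0 * (B 1 0 + B 1 1 + B 2 1) ∧
      B 1 1 = B 0 0 + X * B 1 0 * (B 0 0 + B 1 0 + B 2 0) ∧
      B 2 1 = B 1 0 + X * B 1 0 * (B 1 0 + B 1 1 + B 2 1) ∧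
      B 2 2 = B 1 1 + X * B 2 0 * (B 1 0 + B 1 1 + B 2 1) := by
  have hBb : ∀ s t, B s t = bb s t := by
    intro s t
    rw [hB]
    ext n
    simp [motzkinGF, bb, motzkinCount_eq_pD]
  simp only [hBb]
  exact bb_system
end
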